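/- Let u, v be words over Fin n such that u ++ [0] ++ v is canonical. If c is canonical and c ~ u ++ v, then u is a prefix of c. -/

import Mathlib

variable {n : ℕ}

/-- Generating relation of the Kiselman congruence on words over `Fin n`. -/
inductive KisStep : List (Fin n) → List (Fin n) → Prop
  | idem : ∀ (u v : List (Fin n)) (i : Fin n),
      KisStep (u ++ [i, i] ++ v) (u ++ [i] ++ v)
  | left : ∀ (u v : List (Fin n)) (i j : Fin n), i < j →
      KisStep (u ++ [i, j, i] ++ v) (u ++ [i, j] ++ v)
  | right : ∀ (u v : List (Fin n)) (i j : Fin n), i < j →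
      KisStep (u ++ [j, i, j] ++ v) (u ++ [i, j] ++ v)

/-- The Kiselman congruence: smallest equivalence relation containing `KisStep`. -/
def KisEquiv (x y : List (Fin n)) : Prop := Relation.EqvGen KisStep x y

/-- An infix `[i] ++ u ++ [i]` is special if `u` contains a letter `> i` and a letter `< i`. -/
def Special (i : Fin n) (u : List (Fin n)) : Prop :=
  (∃ j ∈ u, i < j) ∧ (∃ j ∈ u, j < i)

/-- A word is canonical if all its infixes of the form `[i] ++ u ++ [i]` are special. -/
def Canonical (w : List (Fin n)) : Prop :=
  ∀ (i : Fin n) (u : List (Fin n)), ([i] ++ u ++ [i]) <:+: w → Special i u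

/-- Delete all letters strictly smaller than `k`. -/
def filterGE (k : Fin n) (w : List (Fin n)) : List (Fin n) :=
  w.filter (fun a => decide (k ≤ a))

/-- `trunc i w` is the longest suffix of `w` with head `i`, or `[]` if `i ∉ w`. -/
def trunc (i : Fin n) : List (Fin n) → List (Fin n)
  | [] => []
  | a :: t => if a = i then a :: t else trunc i t

/-- Longest suffix of `w` whose head is `< k` (as a natural number), or `[]`. -/
def truncLtN (k : ℕ) : List (Fin n) → List (Fin n)
  | [] => []
  | a :: t => if (a : ℕ) < k then a :: t else truncLtN k t

/-- `join u v = u⁺ ++ v`, where `u⁻` is the longest suffix of `u` that is a sublist of `v`. -/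
def join : List (Fin n) → List (Fin n) → List (Fin n)
  | [], v => v
  | a :: t, v => if (a :: t).Sublist v then v else a :: join t v

/-- The local update function at vertex `i` of the update system `S_n^⋆`. -/
def Fstep (i : Fin n) (s : Fin n → List (Fin n)) : Fin n → List (Fin n) :=
  Function.update s i
    (i :: List.foldr join []
      ((((List.finRange n).filter (fun j => decide (i < j))).reverse).map s))

/-- The evolution induced by a word (rightmost letter acts first). -/
def Fword (w : List (Fin n)) (s : Fin n → List (Fin n)) : Fin n → List (Fin n) :=
  w.foldr Fstep s

/-- The initial system state `⋆`. -/
def starState : Fin n → List (Fin n) := fun _ => []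

namespace K7

open Relation List

inductive Red : List (Fin n) → List (Fin n) → Prop
  | big (α β γ : List (Fin n)) (i : Fin n) (h : ∀ x ∈ β, i < x) :
      Red (α ++ [i] ++ β ++ [i] ++ γ) (α ++ [i] ++ β ++ γ)
  | small (α β γ : List (Fin n)) (i : Fin n) (h : ∀ x ∈ β, x < i) :
      Red (α ++ [i] ++ β ++ [i] ++ γ) (α ++ β ++ [i] ++ γ)

lemma red_big' {a b : List (Fin n)} (α β γ : List (Fin n)) (i : Fin n)
    (h : ∀ x ∈ β, i < x) (ha : a = α ++ [i] ++ β ++ [i] ++ γ)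
    (hb : b = α ++ [i] ++ β ++ γ) : Red a b := by
  subst ha; subst hb; exact Red.big α β γ i h

lemma red_small' {a b : List (Fin n)} (α β γ : List (Fin n)) (i : Fin n)
    (h : ∀ x ∈ β, x < i) (ha : a = α ++ [i] ++ β ++ [i] ++ γ)
    (hb : b = α ++ β ++ [i] ++ γ) : Red a b := by
  subst ha; subst hb; exact Red.small α β γ i h

lemma kisStep_red {a b : List (Fin n)} (h : KisStep a b) : Red a b := by
  cases h with
  | idem u v i => exact red_big' u [] v i (by simp) (by simp) (by simp)
  | left u v i j hij =>
      exact red_big' u [j] v i (by simpa using hij) (by simp) (by simp)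
  | right u v i j hij =>
      exact red_small' u [i] v j (by simpa using hij) (by simp) (by simp)

lemma red_cases {a c : List (Fin n)} (h : Red a c) :
    ∃ α β γ i, a = α ++ [i] ++ β ++ [i] ++ γ ∧
      (((∀ x ∈ β, i < x) ∧ c = α ++ [i] ++ β ++ γ) ∨
       ((∀ x ∈ β, x < i) ∧ c = α ++ β ++ [i] ++ γ)) := by
  cases h with
  | big α β γ i h => exact ⟨α, β, γ, i, rfl, Or.inl ⟨h, rfl⟩⟩
  | small α β γ i h => exact ⟨α, β, γ, i, rfl, Or.inr ⟨h, rfl⟩⟩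

lemma canonical_infix {w v : List (Fin n)} (hw : Canonical w) (h : v <:+: w) :
    Canonical v := fun i u hi => hw i u (hi.trans h)

lemma canonical_not_red {c b : List (Fin n)} (hc : Canonical c) (h : Red c b) : False := by
  obtain ⟨α, β, γ, i, ha, hres⟩ := red_cases h
  have hinf : ([i] ++ β ++ [i]) <:+: c := ⟨α, γ, by rw [ha]; simp⟩
  have hs := hc i β hinf
  rcases hres with ⟨h1, -⟩ | ⟨h1, -⟩
  · obtain ⟨x, hx, hxi⟩ := hs.2; exact absurd (h1 x hx) (asymm hxi)
  · obtain ⟨x, hx, hxi⟩ := hs.1; exact absurd (h1 x hx) (asymm hxi)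

lemma canonical_rtg {c e : List (Fin n)} (hc : Canonical c)
    (h : Relation.ReflTransGen Red c e) : c = e := by
  rcases h.cases_head with rfl | ⟨b, hb, -⟩
  · rfl
  · exact absurd hb (fun hb => canonical_not_red hc hb)

def Geom (α₁ β₁ γ₁ α₂ β₂ γ₂ : List (Fin n)) (i j : Fin n) : Prop :=
  (α₁ = α₂ ∧ i = j ∧ β₁ = β₂ ∧ γ₁ = γ₂) ∨
  (∃ δ, α₂ = α₁ ++ [i] ++ β₁ ++ [i] ++ δ ∧ γ₁ = δ ++ [j] ++ β₂ ++ [j] ++ γ₂) ∨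
  (∃ δ, α₁ = α₂ ++ [j] ++ β₂ ++ [j] ++ δ ∧ γ₂ = δ ++ [i] ++ β₁ ++ [i] ++ γ₁) ∨
  (i = j ∧ α₂ = α₁ ++ [i] ++ β₁ ∧ γ₁ = β₂ ++ [j] ++ γ₂) ∨
  (i = j ∧ α₁ = α₂ ++ [j] ++ β₂ ∧ γ₂ = β₁ ++ [i] ++ γ₁) ∨
  (∃ p q, β₁ = p ++ [j] ++ β₂ ++ [j] ++ q ∧ α₂ = α₁ ++ [i] ++ p ∧ γ₂ = q ++ [i] ++ γ₁) ∨
  (∃ p q, β₂ = p ++ [i] ++ β₁ ++ [i] ++ q ∧ α₁ = α₂ ++ [j] ++ p ∧ γ₁ = q ++ [j] ++ γ₂) ∨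
  (∃ p q r, β₁ = p ++ [j] ++ q ∧ β₂ = q ++ [i] ++ r ∧ α₂ = α₁ ++ [i] ++ p ∧
     γ₁ = r ++ [j] ++ γ₂) ∨
  (∃ p q r, β₂ = p ++ [i] ++ q ∧ β₁ = q ++ [j] ++ r ∧ α₁ = α₂ ++ [j] ++ p ∧
     γ₂ = r ++ [i] ++ γ₁)

lemma geom_symm {α₁ β₁ γ₁ α₂ β₂ γ₂ : List (Fin n)} {i j : Fin n}
    (h : Geom α₂ β₂ γ₂ α₁ β₁ γ₁ j i) : Geom α₁ β₁ γ₁ α₂ β₂ γ₂ i j := by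
  unfold Geom at h ⊢
  rcases h with ⟨h1,h2,h3,h4⟩|h|h|⟨h1,h2,h3⟩|⟨h1,h2,h3⟩|h|h|h|h
  · exact Or.inl ⟨h1.symm, h2.symm, h3.symm, h4.symm⟩
  · exact Or.inr (Or.inr (Or.inl h))
  · exact Or.inr (Or.inl h)
  · exact Or.inr <| Or.inr <| Or.inr <| Or.inr <| Or.inl ⟨h1.symm, h2, h3⟩
  · exact Or.inr <| Or.inr <| Or.inr <| Or.inl ⟨h1.symm, h2, h3⟩
  · exact Or.inr <| Or.inr <| Or.inr <| Or.inr <| Or.inr <| Or.inr <| Or.inl h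
  · exact Or.inr <| Or.inr <| Or.inr <| Or.inr <| Or.inr <| Or.inl h
  · exact Or.inr <| Or.inr <| Or.inr <| Or.inr <| Or.inr <| Or.inr <| Or.inr <| Or.inr h
  · exact Or.inr <| Or.inr <| Or.inr <| Or.inr <| Or.inr <| Or.inr <| Or.inr <| Or.inl h

lemma geom_half {α₁ β₁ γ₁ α₂ β₂ γ₂ : List (Fin n)} {i j : Fin n}
    (hne₁ : i ∉ β₁) (hne₂ : j ∉ β₂) (δ : List (Fin n))
    (hα : α₂ = α₁ ++ δ)
    (hrest : [i] ++ (β₁ ++ [i] ++ γ₁) = δ ++ ([j] ++ (β₂ ++ [j] ++ γ₂))) :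
    Geom α₁ β₁ γ₁ α₂ β₂ γ₂ i j := by
  unfold Geom
  cases δ with
  | nil =>
    simp only [nil_append] at hrest
    simp only [append_nil] at hα
    have h' : i :: (β₁ ++ [i] ++ γ₁) = j :: (β₂ ++ [j] ++ γ₂) := by simpa using hrest
    injection h' with hij h2
    subst hij
    -- β₁ ++ ([i] ++ γ₁) = β₂ ++ ([i] ++ γ₂)
    rcases List.append_eq_append_iff.mp (by simpa using h2 :
        β₁ ++ ([i] ++ γ₁) = β₂ ++ ([i] ++ γ₂)) with ⟨ε, hβ₂, hε⟩ | ⟨ε, hβ₁, hε⟩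
    · cases ε with
      | nil =>
        simp only [append_nil] at hβ₂
        have : γ₁ = γ₂ := by simpa using hε
        exact Or.inl ⟨hα.symm, rfl, hβ₂.symm, this⟩
      | cons e ε' =>
        exfalso
        have he : e = i := by
          have : i :: γ₁ = e :: (ε' ++ ([i] ++ γ₂)) := by simpa using hε
          injection this with h _
          exact h.symm
        subst he
        exact hne₂ (by rw [hβ₂]; simp)
    · cases ε with
      | nil =>
        simp only [append_nil] at hβ₁
        have : γ₂ = γ₁ := by simpa using hε
        exact Or.inl ⟨hα.symm, rfl, hβ₁, this.symm⟩
      | cons e ε' =>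
        exfalso
        have he : i = e := by
          have : i :: γ₂ = e :: (ε' ++ ([i] ++ γ₁)) := by simpa using hε
          injection this with h _
        subst he
        exact hne₁ (by rw [hβ₁]; simp)
  | cons d δ' =>
    have hd : i = d := by
      have : i :: (β₁ ++ [i] ++ γ₁) = d :: (δ' ++ ([j] ++ (β₂ ++ [j] ++ γ₂))) := by
        simpa using hrest
      injection this with h _
    subst hd
    have hrest₂ : β₁ ++ ([i] ++ γ₁) = δ' ++ ([j] ++ (β₂ ++ [j] ++ γ₂)) := by
      have : i :: (β₁ ++ [i] ++ γ₁) = i :: (δ' ++ ([j] ++ (β₂ ++ [j] ++ γ₂))) := by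
        simpa using hrest
      injection this with _ h
      simpa using h
    rcases List.append_eq_append_iff.mp hrest₂ with ⟨ε, hδ', hε⟩ | ⟨ε, hβ₁, hε⟩
    · -- δ' = β₁ ++ ε , [i] ++ γ₁ = ε ++ [j] ++ β₂ ++ [j] ++ γ₂
      cases ε with
      | nil =>
        simp only [append_nil] at hδ'
        have h' : i :: γ₁ = j :: (β₂ ++ ([j] ++ γ₂)) := by simpa using hε
        injection h' with hij h2
        subst hij
        refine Or.inr <| Or.inr <| Or.inr <| Or.inl ⟨rfl, ?_, by simpa using h2⟩
        rw [hα, hδ']; simp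
      | cons e ε' =>
        have he : i = e := by
          have : i :: γ₁ = e :: (ε' ++ ([j] ++ (β₂ ++ [j] ++ γ₂))) := by simpa using hε
          injection this with h _
        subst he
        have hγ₁ : γ₁ = ε' ++ [j] ++ β₂ ++ [j] ++ γ₂ := by
          have : i :: γ₁ = i :: (ε' ++ ([j] ++ (β₂ ++ [j] ++ γ₂))) := by simpa using hε
          injection this with _ h; simpa [List.append_assoc] using h
        refine Or.inr <| Or.inl ⟨ε', ?_, hγ₁⟩
        rw [hα, hδ']; simp
    · -- β₁ = δ' ++ ε , [j] ++ β₂ ++ [j] ++ γ₂ = ε ++ [i] ++ γ₁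
      cases ε with
      | nil =>
        simp only [append_nil] at hβ₁
        have h' : j :: (β₂ ++ ([j] ++ γ₂)) = i :: γ₁ := by simpa using hε
        injection h' with hij h2
        subst hij
        refine Or.inr <| Or.inr <| Or.inr <| Or.inl ⟨rfl, ?_, by simpa using h2.symm⟩
        rw [hα, hβ₁]; simp
      | cons e ε' =>
        have he : j = e := by
          have : j :: (β₂ ++ ([j] ++ γ₂)) = e :: (ε' ++ ([i] ++ γ₁)) := by simpa using hε
          injection this with h _
        subst he
        have hε₂ : β₂ ++ ([j] ++ γ₂) = ε' ++ ([i] ++ γ₁) := by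
          have : j :: (β₂ ++ ([j] ++ γ₂)) = j :: (ε' ++ ([i] ++ γ₁)) := by simpa using hε
          injection this with _ h
        rcases List.append_eq_append_iff.mp hε₂ with ⟨ζ, hε', hζ⟩ | ⟨ζ, hβ₂, hζ⟩
        · -- ε' = β₂ ++ ζ , [j] ++ γ₂ = ζ ++ [i] ++ γ₁
          cases ζ with
          | nil =>
            exfalso
            simp only [append_nil] at hε'
            have h' : j :: γ₂ = i :: γ₁ := by simpa using hζ
            injection h' with hij _
            subst hij
            exact hne₁ (by rw [hβ₁, hε']; simp)
          | cons z ζ' =>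
            have hz : j = z := by
              have : j :: γ₂ = z :: (ζ' ++ ([i] ++ γ₁)) := by simpa using hζ
              injection this with h _
            subst hz
            have hγ₂ : γ₂ = ζ' ++ [i] ++ γ₁ := by
              have : j :: γ₂ = j :: (ζ' ++ ([i] ++ γ₁)) := by simpa using hζ
              injection this with _ h; simpa [List.append_assoc] using h
            refine Or.inr <| Or.inr <| Or.inr <| Or.inr <| Or.inr <| Or.inl
              ⟨δ', ζ', ?_, by rw [hα]; simp, hγ₂⟩
            rw [hβ₁, hε']; simp
        · -- β₂ = ε' ++ ζ , [i] ++ γ₁ = ζ ++ [j] ++ γ₂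
          cases ζ with
          | nil =>
            exfalso
            simp only [append_nil] at hβ₂
            have h' : i :: γ₁ = j :: γ₂ := by simpa using hζ
            injection h' with hij _
            subst hij
            exact hne₁ (by rw [hβ₁]; simp)
          | cons z ζ' =>
            have hz : i = z := by
              have : i :: γ₁ = z :: (ζ' ++ ([j] ++ γ₂)) := by simpa using hζ
              injection this with h _
            subst hz
            have hγ₁ : γ₁ = ζ' ++ [j] ++ γ₂ := by
              have : i :: γ₁ = i :: (ζ' ++ ([j] ++ γ₂)) := by simpa using hζ
              injection this with _ h; simpa [List.append_assoc] using h
            refine Or.inr <| Or.inr <| Or.inr <| Or.inr <| Or.inr <| Or.inr <| Or.inr <|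
              Or.inl ⟨δ', ε', ζ', by rw [hβ₁]; simp, by rw [hβ₂]; simp, by rw [hα]; simp, hγ₁⟩

lemma geom {α₁ β₁ γ₁ α₂ β₂ γ₂ : List (Fin n)} {i j : Fin n}
    (hne₁ : i ∉ β₁) (hne₂ : j ∉ β₂)
    (heq : α₁ ++ [i] ++ β₁ ++ [i] ++ γ₁ = α₂ ++ [j] ++ β₂ ++ [j] ++ γ₂) :
    Geom α₁ β₁ γ₁ α₂ β₂ γ₂ i j := by
  have heq' : α₁ ++ ([i] ++ (β₁ ++ [i] ++ γ₁)) = α₂ ++ ([j] ++ (β₂ ++ [j] ++ γ₂)) := by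
    simpa [List.append_assoc] using heq
  rcases List.append_eq_append_iff.mp heq' with ⟨δ, hα₂, hδ⟩ | ⟨δ, hα₁, hδ⟩
  · exact geom_half hne₁ hne₂ δ hα₂ hδ
  · exact geom_symm (geom_half hne₂ hne₁ δ hα₁ hδ)

lemma reflGen_of_eq {a b : List (Fin n)} (h : a = b) : Relation.ReflGen Red a b := by
  subst h; exact .refl

lemma cond_append {β₁ β₂ : List (Fin n)} {P : Fin n → Prop}
    (h₁ : ∀ x ∈ β₁, P x) (h₂ : ∀ x ∈ β₂, P x) : ∀ x ∈ β₁ ++ β₂, P x := by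
  intro x hx; rcases List.mem_append.mp hx with h | h; exacts [h₁ x h, h₂ x h]

lemma red_sc (a b c : List (Fin n)) (hab : Red a b) (hac : Red a c) :
    ∃ d, Relation.ReflGen Red b d ∧ Relation.ReflGen Red c d := by
  obtain ⟨α₁, β₁, γ₁, i, ha₁, hres₁⟩ := red_cases hab
  obtain ⟨α₂, β₂, γ₂, j, ha₂, hres₂⟩ := red_cases hac
  have hne₁ : i ∉ β₁ := by
    rcases hres₁ with ⟨h, -⟩ | ⟨h, -⟩ <;> exact fun hm => lt_irrefl i (h i hm)
  have hne₂ : j ∉ β₂ := by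
    rcases hres₂ with ⟨h, -⟩ | ⟨h, -⟩ <;> exact fun hm => lt_irrefl j (h j hm)
  have heq : α₁ ++ [i] ++ β₁ ++ [i] ++ γ₁ = α₂ ++ [j] ++ β₂ ++ [j] ++ γ₂ := by
    rw [← ha₁, ← ha₂]
  clear ha₁ ha₂ hab hac
  rcases geom hne₁ hne₂ heq with G | G | G | G | G | G | G | G | G
  · -- same pair
    obtain ⟨rfl, rfl, rfl, rfl⟩ := G
    rcases hres₁ with ⟨h₁, rfl⟩ | ⟨h₁, rfl⟩ <;> rcases hres₂ with ⟨h₂, rfl⟩ | ⟨h₂, rfl⟩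
    · exact ⟨_, .refl, .refl⟩
    · have hβ : β₁ = [] := by
        cases β₁ with
        | nil => rfl
        | cons y t => exact absurd (h₁ y (by simp)) (asymm (h₂ y (by simp)))
      subst hβ
      exact ⟨α₁ ++ [i] ++ γ₁, reflGen_of_eq (by simp), reflGen_of_eq (by simp)⟩
    · have hβ : β₁ = [] := by
        cases β₁ with
        | nil => rfl
        | cons y t => exact absurd (h₂ y (by simp)) (asymm (h₁ y (by simp)))
      subst hβ
      exact ⟨α₁ ++ [i] ++ γ₁, reflGen_of_eq (by simp), reflGen_of_eq (by simp)⟩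
    · exact ⟨_, .refl, .refl⟩
  · -- disjoint, redex2 to the right
    obtain ⟨δ, rfl, rfl⟩ := G
    rcases hres₁ with ⟨h₁, rfl⟩ | ⟨h₁, rfl⟩ <;> rcases hres₂ with ⟨h₂, rfl⟩ | ⟨h₂, rfl⟩
    · exact ⟨α₁ ++ [i] ++ β₁ ++ δ ++ [j] ++ β₂ ++ γ₂,
        .single (red_big' (α₁ ++ [i] ++ β₁ ++ δ) β₂ γ₂ j h₂ (by simp) (by simp)),
        .single (red_big' α₁ β₁ (δ ++ [j] ++ β₂ ++ γ₂) i h₁ (by simp) (by simp))⟩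
    · exact ⟨α₁ ++ [i] ++ β₁ ++ δ ++ β₂ ++ [j] ++ γ₂,
        .single (red_small' (α₁ ++ [i] ++ β₁ ++ δ) β₂ γ₂ j h₂ (by simp) (by simp)),
        .single (red_big' α₁ β₁ (δ ++ β₂ ++ [j] ++ γ₂) i h₁ (by simp) (by simp))⟩
    · exact ⟨α₁ ++ β₁ ++ [i] ++ δ ++ [j] ++ β₂ ++ γ₂,
        .single (red_big' (α₁ ++ β₁ ++ [i] ++ δ) β₂ γ₂ j h₂ (by simp) (by simp)),
        .single (red_small' α₁ β₁ (δ ++ [j] ++ β₂ ++ γ₂) i h₁ (by simp) (by simp))⟩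
    · exact ⟨α₁ ++ β₁ ++ [i] ++ δ ++ β₂ ++ [j] ++ γ₂,
        .single (red_small' (α₁ ++ β₁ ++ [i] ++ δ) β₂ γ₂ j h₂ (by simp) (by simp)),
        .single (red_small' α₁ β₁ (δ ++ β₂ ++ [j] ++ γ₂) i h₁ (by simp) (by simp))⟩
  · -- disjoint, redex2 to the left
    obtain ⟨δ, rfl, rfl⟩ := G
    rcases hres₁ with ⟨h₁, rfl⟩ | ⟨h₁, rfl⟩ <;> rcases hres₂ with ⟨h₂, rfl⟩ | ⟨h₂, rfl⟩
    · exact ⟨α₂ ++ [j] ++ β₂ ++ δ ++ [i] ++ β₁ ++ γ₁,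
        .single (red_big' α₂ β₂ (δ ++ [i] ++ β₁ ++ γ₁) j h₂ (by simp) (by simp)),
        .single (red_big' (α₂ ++ [j] ++ β₂ ++ δ) β₁ γ₁ i h₁ (by simp) (by simp))⟩
    · exact ⟨α₂ ++ β₂ ++ [j] ++ δ ++ [i] ++ β₁ ++ γ₁,
        .single (red_small' α₂ β₂ (δ ++ [i] ++ β₁ ++ γ₁) j h₂ (by simp) (by simp)),
        .single (red_big' (α₂ ++ β₂ ++ [j] ++ δ) β₁ γ₁ i h₁ (by simp) (by simp))⟩
    · exact ⟨α₂ ++ [j] ++ β₂ ++ δ ++ β₁ ++ [i] ++ γ₁,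
        .single (red_big' α₂ β₂ (δ ++ β₁ ++ [i] ++ γ₁) j h₂ (by simp) (by simp)),
        .single (red_small' (α₂ ++ [j] ++ β₂ ++ δ) β₁ γ₁ i h₁ (by simp) (by simp))⟩
    · exact ⟨α₂ ++ β₂ ++ [j] ++ δ ++ β₁ ++ [i] ++ γ₁,
        .single (red_small' α₂ β₂ (δ ++ β₁ ++ [i] ++ γ₁) j h₂ (by simp) (by simp)),
        .single (red_small' (α₂ ++ β₂ ++ [j] ++ δ) β₁ γ₁ i h₁ (by simp) (by simp))⟩
  · -- shared endpoint: a = α₁ i β₁ i β₂ i γ₂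
    obtain ⟨rfl, rfl, rfl⟩ := G
    rcases hres₁ with ⟨h₁, rfl⟩ | ⟨h₁, rfl⟩ <;> rcases hres₂ with ⟨h₂, rfl⟩ | ⟨h₂, rfl⟩
    · exact ⟨α₁ ++ [i] ++ β₁ ++ β₂ ++ γ₂,
        .single (red_big' α₁ (β₁ ++ β₂) γ₂ i (cond_append h₁ h₂) (by simp) (by simp)),
        .single (red_big' α₁ β₁ (β₂ ++ γ₂) i h₁ (by simp) (by simp))⟩
    · exact ⟨_, .refl, reflGen_of_eq (by simp)⟩
    · exact ⟨α₁ ++ β₁ ++ [i] ++ β₂ ++ γ₂,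
        .single (red_big' (α₁ ++ β₁) β₂ γ₂ i h₂ (by simp) (by simp)),
        .single (red_small' α₁ β₁ (β₂ ++ γ₂) i h₁ (by simp) (by simp))⟩
    · exact ⟨α₁ ++ β₁ ++ β₂ ++ [i] ++ γ₂,
        .single (red_small' (α₁ ++ β₁) β₂ γ₂ i h₂ (by simp) (by simp)),
        .single (red_small' α₁ (β₁ ++ β₂) γ₂ i (cond_append h₁ h₂) (by simp) (by simp))⟩
  · -- shared endpoint mirrored: a = α₂ i β₂ i β₁ i γ₁
    obtain ⟨rfl, rfl, rfl⟩ := G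
    rcases hres₁ with ⟨h₁, rfl⟩ | ⟨h₁, rfl⟩ <;> rcases hres₂ with ⟨h₂, rfl⟩ | ⟨h₂, rfl⟩
    · exact ⟨α₂ ++ [i] ++ β₂ ++ β₁ ++ γ₁,
        .single (red_big' α₂ β₂ (β₁ ++ γ₁) i h₂ (by simp) (by simp)),
        .single (red_big' α₂ (β₂ ++ β₁) γ₁ i (cond_append h₂ h₁) (by simp) (by simp))⟩
    · exact ⟨α₂ ++ β₂ ++ [i] ++ β₁ ++ γ₁,
        .single (red_small' α₂ β₂ (β₁ ++ γ₁) i h₂ (by simp) (by simp)),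
        .single (red_big' (α₂ ++ β₂) β₁ γ₁ i h₁ (by simp) (by simp))⟩
    · exact ⟨_, .refl, reflGen_of_eq (by simp)⟩
    · exact ⟨α₂ ++ β₂ ++ β₁ ++ [i] ++ γ₁,
        .single (red_small' α₂ (β₂ ++ β₁) γ₁ i (cond_append h₂ h₁) (by simp) (by simp)),
        .single (red_small' (α₂ ++ β₂) β₁ γ₁ i h₁ (by simp) (by simp))⟩
  · -- redex2 nested inside β₁
    obtain ⟨p, q, rfl, rfl, rfl⟩ := G
    rcases hres₁ with ⟨h₁, rfl⟩ | ⟨h₁, rfl⟩ <;> rcases hres₂ with ⟨h₂, rfl⟩ | ⟨h₂, rfl⟩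
    · exact ⟨α₁ ++ [i] ++ (p ++ [j] ++ β₂ ++ q) ++ γ₁,
        .single (red_big' (α₁ ++ [i] ++ p) β₂ (q ++ γ₁) j h₂ (by simp) (by simp)),
        .single (red_big' α₁ (p ++ [j] ++ β₂ ++ q) γ₁ i
          (fun x hx => h₁ x (by simp only [List.mem_append, List.mem_singleton] at hx ⊢; tauto))
          (by simp) (by simp))⟩
    · exact ⟨α₁ ++ [i] ++ (p ++ β₂ ++ [j] ++ q) ++ γ₁,
        .single (red_small' (α₁ ++ [i] ++ p) β₂ (q ++ γ₁) j h₂ (by simp) (by simp)),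
        .single (red_big' α₁ (p ++ β₂ ++ [j] ++ q) γ₁ i
          (fun x hx => h₁ x (by simp only [List.mem_append, List.mem_singleton] at hx ⊢; tauto))
          (by simp) (by simp))⟩
    · exact ⟨α₁ ++ (p ++ [j] ++ β₂ ++ q) ++ [i] ++ γ₁,
        .single (red_big' (α₁ ++ p) β₂ (q ++ [i] ++ γ₁) j h₂ (by simp) (by simp)),
        .single (red_small' α₁ (p ++ [j] ++ β₂ ++ q) γ₁ i
          (fun x hx => h₁ x (by simp only [List.mem_append, List.mem_singleton] at hx ⊢; tauto))
          (by simp) (by simp))⟩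
    · exact ⟨α₁ ++ (p ++ β₂ ++ [j] ++ q) ++ [i] ++ γ₁,
        .single (red_small' (α₁ ++ p) β₂ (q ++ [i] ++ γ₁) j h₂ (by simp) (by simp)),
        .single (red_small' α₁ (p ++ β₂ ++ [j] ++ q) γ₁ i
          (fun x hx => h₁ x (by simp only [List.mem_append, List.mem_singleton] at hx ⊢; tauto))
          (by simp) (by simp))⟩
  · -- redex1 nested inside β₂
    obtain ⟨p, q, rfl, rfl, rfl⟩ := G
    rcases hres₁ with ⟨h₁, rfl⟩ | ⟨h₁, rfl⟩ <;> rcases hres₂ with ⟨h₂, rfl⟩ | ⟨h₂, rfl⟩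
    · exact ⟨α₂ ++ [j] ++ (p ++ [i] ++ β₁ ++ q) ++ γ₂,
        .single (red_big' α₂ (p ++ [i] ++ β₁ ++ q) γ₂ j
          (fun x hx => h₂ x (by simp only [List.mem_append, List.mem_singleton] at hx ⊢; tauto))
          (by simp) (by simp)),
        .single (red_big' (α₂ ++ [j] ++ p) β₁ (q ++ γ₂) i h₁ (by simp) (by simp))⟩
    · exact ⟨α₂ ++ (p ++ [i] ++ β₁ ++ q) ++ [j] ++ γ₂,
        .single (red_small' α₂ (p ++ [i] ++ β₁ ++ q) γ₂ j
          (fun x hx => h₂ x (by simp only [List.mem_append, List.mem_singleton] at hx ⊢; tauto))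
          (by simp) (by simp)),
        .single (red_big' (α₂ ++ p) β₁ (q ++ [j] ++ γ₂) i h₁ (by simp) (by simp))⟩
    · exact ⟨α₂ ++ [j] ++ (p ++ β₁ ++ [i] ++ q) ++ γ₂,
        .single (red_big' α₂ (p ++ β₁ ++ [i] ++ q) γ₂ j
          (fun x hx => h₂ x (by simp only [List.mem_append, List.mem_singleton] at hx ⊢; tauto))
          (by simp) (by simp)),
        .single (red_small' (α₂ ++ [j] ++ p) β₁ (q ++ γ₂) i h₁ (by simp) (by simp))⟩
    · exact ⟨α₂ ++ (p ++ β₁ ++ [i] ++ q) ++ [j] ++ γ₂,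
        .single (red_small' α₂ (p ++ β₁ ++ [i] ++ q) γ₂ j
          (fun x hx => h₂ x (by simp only [List.mem_append, List.mem_singleton] at hx ⊢; tauto))
          (by simp) (by simp)),
        .single (red_small' (α₂ ++ p) β₁ (q ++ [j] ++ γ₂) i h₁ (by simp) (by simp))⟩
  · -- overlap: i ... j ... i ... j
    obtain ⟨p, q, r, rfl, rfl, rfl, rfl⟩ := G
    rcases hres₁ with ⟨h₁, rfl⟩ | ⟨h₁, rfl⟩ <;> rcases hres₂ with ⟨h₂, rfl⟩ | ⟨h₂, rfl⟩
    · exact absurd (h₁ j (by simp)) (asymm (h₂ i (by simp)))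
    · exact ⟨α₁ ++ [i] ++ p ++ q ++ r ++ [j] ++ γ₂,
        .single (red_small' (α₁ ++ [i] ++ p) (q ++ r) γ₂ j
          (cond_append (fun x hx => h₂ x (by simp [hx])) (fun x hx => h₂ x (by simp [hx])))
          (by simp) (by simp)),
        .single (red_big' α₁ (p ++ q) (r ++ [j] ++ γ₂) i
          (cond_append (fun x hx => h₁ x (by simp [hx])) (fun x hx => h₁ x (by simp [hx])))
          (by simp) (by simp))⟩
    · exact ⟨α₁ ++ p ++ [j] ++ q ++ [i] ++ r ++ γ₂,
        .single (red_big' (α₁ ++ p) (q ++ [i] ++ r) γ₂ j h₂ (by simp) (by simp)),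
        .single (red_small' α₁ (p ++ [j] ++ q) (r ++ γ₂) i h₁ (by simp) (by simp))⟩
    · exact ⟨α₁ ++ p ++ q ++ [i] ++ r ++ [j] ++ γ₂,
        .single (red_small' (α₁ ++ p) (q ++ [i] ++ r) γ₂ j h₂ (by simp) (by simp)),
        .single (red_small' α₁ (p ++ q) (r ++ [j] ++ γ₂) i
          (cond_append (fun x hx => h₁ x (by simp [hx])) (fun x hx => h₁ x (by simp [hx])))
          (by simp) (by simp))⟩
  · -- overlap mirrored: j ... i ... j ... i
    obtain ⟨p, q, r, rfl, rfl, rfl, rfl⟩ := G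
    rcases hres₁ with ⟨h₁, rfl⟩ | ⟨h₁, rfl⟩ <;> rcases hres₂ with ⟨h₂, rfl⟩ | ⟨h₂, rfl⟩
    · exact absurd (h₂ i (by simp)) (asymm (h₁ j (by simp)))
    · exact ⟨α₂ ++ p ++ [i] ++ q ++ [j] ++ r ++ γ₁,
        .single (red_small' α₂ (p ++ [i] ++ q) (r ++ γ₁) j h₂ (by simp) (by simp)),
        .single (red_big' (α₂ ++ p) (q ++ [j] ++ r) γ₁ i h₁ (by simp) (by simp))⟩
    · exact ⟨α₂ ++ [j] ++ p ++ q ++ r ++ [i] ++ γ₁,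
        .single (red_big' α₂ (p ++ q) (r ++ [i] ++ γ₁) j
          (cond_append (fun x hx => h₂ x (by simp [hx])) (fun x hx => h₂ x (by simp [hx])))
          (by simp) (by simp)),
        .single (red_small' (α₂ ++ [j] ++ p) (q ++ r) γ₁ i
          (cond_append (fun x hx => h₁ x (by simp [hx])) (fun x hx => h₁ x (by simp [hx])))
          (by simp) (by simp))⟩
    · exact ⟨α₂ ++ p ++ q ++ [j] ++ r ++ [i] ++ γ₁,
        .single (red_small' α₂ (p ++ q) (r ++ [i] ++ γ₁) j
          (cond_append (fun x hx => h₂ x (by simp [hx])) (fun x hx => h₂ x (by simp [hx])))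
          (by simp) (by simp)),
        .single (red_small' (α₂ ++ p) (q ++ [j] ++ r) γ₁ i h₁ (by simp) (by simp))⟩

def HasBig (w : List (Fin n)) : Prop :=
  ∀ (α β γ : List (Fin n)) (i : Fin n), w = α ++ [i] ++ β ++ [i] ++ γ → ∃ x ∈ β, i < x

lemma mid_helper {α β ρ τ : List (Fin n)} {i x : Fin n} (h : ∀ y ∈ β, i < y) (hx : x < i)
    (heq : α ++ [i] ++ β = ρ ++ [x] ++ τ) : i ∈ τ := by
  have heq' : α ++ ([i] ++ β) = ρ ++ ([x] ++ τ) := by simpa [List.append_assoc] using heq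
  rcases List.append_eq_append_iff.mp heq' with ⟨δ, hρ, h2⟩ | ⟨δ, hα, h2⟩
  · cases δ with
    | nil =>
      exfalso
      have : i :: β = x :: τ := by simpa using h2
      injection this with h1 _
      subst h1; exact lt_irrefl i hx
    | cons d δ' =>
      exfalso
      have : i :: β = d :: (δ' ++ ([x] ++ τ)) := by simpa using h2
      injection this with h1 h2'
      subst h1
      have hxβ : x ∈ β := by rw [h2']; simp
      exact absurd (h x hxβ) (asymm hx)
  · cases δ with
    | nil =>
      exfalso
      have : x :: τ = i :: β := by simpa using h2
      injection this with h1 _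
      subst h1; exact lt_irrefl x hx
    | cons d δ' =>
      have : x :: τ = d :: (δ' ++ ([i] ++ β)) := by simpa using h2
      injection this with _ h2'
      rw [h2']; simp

lemma hasBig_red {α β γ : List (Fin n)} {i : Fin n} (hβ : ∀ x ∈ β, i < x)
    (H : HasBig (α ++ [i] ++ β ++ [i] ++ γ)) : HasBig (α ++ [i] ++ β ++ γ) := by
  intro ρ μ σ x heq
  have heq' : (α ++ [i] ++ β) ++ γ = ρ ++ ([x] ++ (μ ++ ([x] ++ σ))) := by
    rw [heq]; simp [List.append_assoc]
  rcases List.append_eq_append_iff.mp heq' with ⟨δ, hρ, hγ⟩ | ⟨δ, hL, hrest⟩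
  · -- both x's inside γ
    exact H (α ++ [i] ++ β ++ [i] ++ δ) μ σ x (by rw [hγ]; simp [List.append_assoc])
  · cases δ with
    | nil =>
      -- α ++ [i] ++ β = ρ ; γ = [x] ++ μ ++ [x] ++ σ
      have hL' : α ++ [i] ++ β = ρ := by simpa using hL
      have hγ : γ = [x] ++ (μ ++ ([x] ++ σ)) := by simpa using hrest.symm
      exact H (ρ ++ [i]) μ σ x (by rw [hγ, ← hL']; simp [List.append_assoc])
    | cons d δ' =>
      have hd : x = d := by
        have : x :: (μ ++ ([x] ++ σ)) = d :: (δ' ++ γ) := by simpa using hrest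
        injection this with h _
      subst hd
      have hrest₂ : μ ++ ([x] ++ σ) = δ' ++ γ := by
        have : x :: (μ ++ ([x] ++ σ)) = x :: (δ' ++ γ) := by simpa using hrest
        injection this with _ h
      have hL' : α ++ [i] ++ β = ρ ++ [x] ++ δ' := by
        rw [hL]; simp [List.append_assoc]
      rcases List.append_eq_append_iff.mp hrest₂ with ⟨ε, hδ', hε⟩ | ⟨ε, hμ, hγ⟩
      · cases ε with
        | nil =>
          -- δ' = μ, γ = [x] ++ σ
          simp only [append_nil] at hδ'
          have hγ : γ = [x] ++ σ := by simpa using hε.symm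
          rw [hδ'] at hL'
          have := H ρ (μ ++ [i]) σ x (by rw [hγ, hL']; simp [List.append_assoc])
          obtain ⟨y, hy, hxy⟩ := this
          rcases List.mem_append.mp hy with hy | hy
          · exact ⟨y, hy, hxy⟩
          · have hyi : y = i := by simpa using hy
            subst hyi
            exact ⟨y, mid_helper hβ hxy hL', hxy⟩
        | cons e ε' =>
          have he : x = e := by
            have : x :: σ = e :: (ε' ++ γ) := by simpa using hε
            injection this with h _
          subst he
          have hσ : σ = ε' ++ γ := by
            have : x :: σ = x :: (ε' ++ γ) := by simpa using hε
            injection this with _ h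
          -- whole x-pair inside α ++ [i] ++ β
          have hL'' : α ++ [i] ++ β = ρ ++ [x] ++ μ ++ [x] ++ ε' := by
            rw [hL', hδ']; simp [List.append_assoc]
          exact H ρ μ (ε' ++ [i] ++ γ) x
            (by rw [hL'']; simp [List.append_assoc])
      · -- μ = δ' ++ ε, γ = ε ++ [x] ++ σ
        have hγ' : γ = ε ++ ([x] ++ σ) := hγ
        have := H ρ (δ' ++ [i] ++ ε) σ x
          (by rw [hγ', hL']; simp [List.append_assoc])
        obtain ⟨y, hy, hxy⟩ := this
        have hy' : y ∈ δ' ∨ y = i ∨ y ∈ ε := by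
          simpa using hy
        rcases hy' with hy1 | hy1 | hy1
        · exact ⟨y, by rw [hμ]; simp [hy1], hxy⟩
        · subst hy1
          have : y ∈ δ' := mid_helper hβ hxy hL'
          exact ⟨y, by rw [hμ]; simp [this], hxy⟩
        · exact ⟨y, by rw [hμ]; simp [hy1], hxy⟩

lemma extract_aux : ∀ (N : ℕ) (u s t : List (Fin n)) (i : Fin n), u.length ≤ N →
    (∀ x ∈ u, ¬ x < i) →
    ∃ α β γ j, s ++ [i] ++ u ++ [i] ++ t = α ++ [j] ++ β ++ [j] ++ γ ∧ ∀ x ∈ β, j < x := by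
  intro N
  induction N with
  | zero =>
    intro u s t i hlen _
    have hu : u = [] := by
      cases u with
      | nil => rfl
      | cons a l => simp at hlen
    subst hu
    exact ⟨s, [], t, i, by simp, by simp⟩
  | succ N ih =>
    intro u s t i hlen hni
    by_cases hmem : i ∈ u
    · obtain ⟨u₁, u₂, rfl⟩ := List.append_of_mem hmem
      have h2 : ∀ x ∈ u₂, ¬ x < i := fun x hx => hni x (by simp [hx])
      have hlen2 : u₂.length ≤ N := by simp at hlen; omega
      obtain ⟨α, β, γ, j, heq, hb⟩ := ih u₂ (s ++ [i] ++ u₁) t i hlen2 h2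
      refine ⟨α, β, γ, j, ?_, hb⟩
      rw [← heq]; simp
    · refine ⟨s, u, t, i, rfl, fun x hx => ?_⟩
      rcases lt_trichotomy i x with h | h | h
      · exact h
      · exact absurd (h ▸ hx) hmem
      · exact absurd h (hni x hx)

lemma not_canonical_extract {w : List (Fin n)} (hbig : HasBig w) (hw : ¬ Canonical w) :
    ∃ α β γ i, w = α ++ [i] ++ β ++ [i] ++ γ ∧ ∀ x ∈ β, i < x := by
  unfold Canonical at hw
  push_neg at hw
  obtain ⟨i, u, hinf, hns⟩ := hw
  obtain ⟨s, t, hst⟩ := hinf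
  have hw' : w = s ++ [i] ++ u ++ [i] ++ t := by rw [← hst]; simp [List.append_assoc]
  have hbigu : ∃ j ∈ u, i < j := hbig s u t i hw'
  have hnsmall : ∀ x ∈ u, ¬ x < i := by
    intro x hx hlt
    exact hns ⟨hbigu, ⟨x, hx, hlt⟩⟩
  obtain ⟨α, β, γ, j, heq, hb⟩ := extract_aux u.length u s t i le_rfl hnsmall
  exact ⟨α, β, γ, j, by rw [hw', heq], hb⟩

lemma hasBig_of_canonical {u v : List (Fin n)} {z : Fin n} (hz : (z : ℕ) = 0)
    (hcan : Canonical (u ++ [z] ++ v)) : HasBig (u ++ v) := by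
  intro α β γ i heq
  suffices h : ∃ β', ([i] ++ β' ++ [i]) <:+: (u ++ [z] ++ v) ∧ ∀ x ∈ β', x ∈ β ∨ x = z by
    obtain ⟨β', hinf, hmem⟩ := h
    obtain ⟨x, hxβ', hix⟩ := (hcan i β' hinf).1
    rcases hmem x hxβ' with hx | rfl
    · exact ⟨x, hx, hix⟩
    · exfalso; omega
  have heq' : u ++ v = α ++ ([i] ++ (β ++ ([i] ++ γ))) := by rw [heq]; simp [List.append_assoc]
  rcases List.append_eq_append_iff.mp heq' with ⟨δ, hα, hv⟩ | ⟨δ, hu, hrest⟩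
  · -- pair inside v
    refine ⟨β, ⟨u ++ [z] ++ δ, γ, ?_⟩, fun x hx => Or.inl hx⟩
    rw [hv]; simp [List.append_assoc]
  · cases δ with
    | nil =>
      -- u = α, v = [i] ++ β ++ [i] ++ γ
      simp only [append_nil] at hu
      have hv : v = [i] ++ (β ++ ([i] ++ γ)) := by simpa using hrest.symm
      refine ⟨β, ⟨α ++ [z], γ, ?_⟩, fun x hx => Or.inl hx⟩
      rw [hv, hu]; simp [List.append_assoc]
    | cons d δ' =>
      have hd : i = d := by
        have : i :: (β ++ ([i] ++ γ)) = d :: (δ' ++ v) := by simpa using hrest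
        injection this with h _
      subst hd
      have hrest₂ : β ++ ([i] ++ γ) = δ' ++ v := by
        have : i :: (β ++ ([i] ++ γ)) = i :: (δ' ++ v) := by simpa using hrest
        injection this with _ h
      rcases List.append_eq_append_iff.mp hrest₂ with ⟨ε, hδ', hε⟩ | ⟨ε, hβ, hv⟩
      · cases ε with
        | nil =>
          -- δ' = β, v = [i] ++ γ
          simp only [append_nil] at hδ'
          have hv : v = [i] ++ γ := by simpa using hε.symm
          refine ⟨β ++ [z], ⟨α, γ, ?_⟩, fun x hx => ?_⟩
          · rw [hv, hu, hδ']; simp [List.append_assoc]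
          · rcases List.mem_append.mp hx with h | h
            · exact Or.inl h
            · exact Or.inr (by simpa using h)
        | cons e ε' =>
          have he : i = e := by
            have : i :: γ = e :: (ε' ++ v) := by simpa using hε
            injection this with h _
          subst he
          have hγ : γ = ε' ++ v := by
            have : i :: γ = i :: (ε' ++ v) := by simpa using hε
            injection this with _ h
          -- pair inside u
          refine ⟨β, ⟨α, ε' ++ [z] ++ v, ?_⟩, fun x hx => Or.inl hx⟩
          rw [hu, hδ']; simp [List.append_assoc]
      · -- β = δ' ++ ε, v = ε ++ [i] ++ γ
        refine ⟨δ' ++ [z] ++ ε, ⟨α, γ, ?_⟩, fun x hx => ?_⟩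
        · rw [hu, hv]; simp [List.append_assoc]
        · have : x ∈ δ' ∨ x = z ∨ x ∈ ε := by simpa using hx
          rcases this with h | h | h
          · exact Or.inl (by rw [hβ]; simp [h])
          · exact Or.inr h
          · exact Or.inl (by rw [hβ]; simp [h])


lemma lemE : ∀ (N : ℕ) (w : List (Fin n)), w.length ≤ N → HasBig w →
    ∀ u : List (Fin n), Canonical u → u <+: w →
    ∃ d, Relation.ReflTransGen Red w d ∧ Canonical d ∧ u <+: d := by
  intro N
  induction N with
  | zero =>
    intro w hlen hbig u hcu hu
    by_cases hC : Canonical w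
    · exact ⟨w, .refl, hC, hu⟩
    · obtain ⟨α, β, γ, i, heqw, hβ⟩ := not_canonical_extract hbig hC
      exfalso; rw [heqw] at hlen; simp at hlen
  | succ N ih =>
    intro w hlen hbig u hcu hu
    by_cases hC : Canonical w
    · exact ⟨w, .refl, hC, hu⟩
    · obtain ⟨α, β, γ, i, heqw, hβ⟩ := not_canonical_extract hbig hC
      have hLw : (α ++ [i] ++ β) <+: w := ⟨[i] ++ γ, by rw [heqw]; simp [List.append_assoc]⟩
      have hL2 : (α ++ [i] ++ β ++ [i]) <+: w := ⟨γ, by rw [heqw]⟩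
      have hu' : u <+: (α ++ [i] ++ β) := by
        by_cases hle : u.length ≤ (α ++ [i] ++ β).length
        · exact List.prefix_of_prefix_length_le hu hLw hle
        · exfalso
          have h2 : (α ++ [i] ++ β ++ [i]) <+: u :=
            List.prefix_of_prefix_length_le hL2 hu (by simp at hle ⊢; omega)
          obtain ⟨r, hr⟩ := h2
          have hinf : ([i] ++ β ++ [i]) <:+: u := ⟨α, r, by rw [← hr]; simp [List.append_assoc]⟩
          obtain ⟨x, hxβ, hxi⟩ := (hcu i β hinf).2
          exact absurd (hβ x hxβ) (asymm hxi)
      have hred : Red w (α ++ [i] ++ β ++ γ) := red_big' α β γ i hβ heqw rfl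
      have hbig' : HasBig (α ++ [i] ++ β ++ γ) := hasBig_red hβ (by rw [← heqw]; exact hbig)
      have hlen' : (α ++ [i] ++ β ++ γ).length ≤ N := by
        rw [heqw] at hlen; simp at hlen ⊢; omega
      have hu'' : u <+: (α ++ [i] ++ β ++ γ) :=
        hu'.trans ⟨γ, by simp [List.append_assoc]⟩
      obtain ⟨d, hst, hcd, hud⟩ := ih (α ++ [i] ++ β ++ γ) hlen' hbig' u hcu hu''
      exact ⟨d, .head hred hst, hcd, hud⟩

lemma red_sc' (a b c : List (Fin n)) (hab : Red a b) (hac : Red a c) :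
    ∃ d, Relation.ReflGen Red b d ∧ Relation.ReflTransGen Red c d := by
  obtain ⟨d, h1, h2⟩ := red_sc a b c hab hac
  exact ⟨d, h1, h2.to_reflTransGen⟩

lemma join_equiv : Equivalence (Relation.Join (Relation.ReflTransGen (Red (n := n)))) :=
  Relation.equivalence_join_reflTransGen red_sc'

lemma eqvGen_join {x y : List (Fin n)} (h : Relation.EqvGen Red x y) :
    Relation.Join (Relation.ReflTransGen Red) x y := by
  induction h with
  | rel a b hab => exact ⟨b, Relation.ReflTransGen.single hab, Relation.ReflTransGen.refl⟩
  | refl a => exact join_equiv.refl a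
  | symm a b _ ih => exact join_equiv.symm ih
  | trans a b c _ _ ih1 ih2 => exact join_equiv.trans ih1 ih2

end K7

/-- If `u ++ [0] ++ v` is canonical, then the canonical form of `u ++ v` admits `u`
as a prefix. -/
theorem stmt_7 {n : ℕ} (u v c : List (Fin n)) (z : Fin n) (hz : (z : ℕ) = 0)
    (hcan : Canonical (u ++ [z] ++ v)) (hc : Canonical c) (hcw : KisEquiv c (u ++ v)) :
    u <+: c := by
  classical
  have hcanu : Canonical u := K7.canonical_infix hcan ⟨[], [z] ++ v, by simp [List.append_assoc]⟩
  have hbig0 : K7.HasBig (u ++ v) := K7.hasBig_of_canonical hz hcan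
  obtain ⟨d, hst, hcd, hud⟩ :=
    K7.lemE (u ++ v).length (u ++ v) le_rfl hbig0 u hcanu ⟨v, rfl⟩
  have h0 : Relation.EqvGen K7.Red c (u ++ v) :=
    Relation.EqvGen.mono (r := KisStep) (p := K7.Red) (fun a b h => K7.kisStep_red h) c (u ++ v) hcw
  have h1 : Relation.Join (Relation.ReflTransGen K7.Red) c (u ++ v) := K7.eqvGen_join h0
  have h2 : Relation.Join (Relation.ReflTransGen K7.Red) c d :=
    K7.join_equiv.trans h1 ⟨d, hst, Relation.ReflTransGen.refl⟩
  obtain ⟨e, hce, hde⟩ := h2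
  have e1 : c = e := K7.canonical_rtg hc hce
  have e2 : d = e := K7.canonical_rtg hcd hde
  rw [e1, ← e2]
  exact hud
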